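/- Let μ > 0 and let v, φ : D → ℝ with D = (0,∞) × (r_0, ∞), where v(t,r) solves v_t + (v²/2)_r = μ(v_{rr} + (n−1)(v/r)_r) and φ(r) solves the stationary equation (φ²/2)′ = μ(φ″ + (n−1)(φ/r)′) with φ(r) → v_+ at infinity. Set ψ(r) = φ(r) − μ(n−1)/r and w(t,r) = −∫_r^∞ (v(t,y) − φ(y)) dy (assuming v − φ and its relevant derivatives decay at infinity so that all integrals converge and boundary terms at infinity vanish). Then w satisfies w_t + ψ w_r − μ w_{rr} = −(1/2) w_r², for t > 0 and r > r_0. -/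

import Mathlib

open MeasureTheory Filter

theorem stmt_16 (n : ℕ) (hn : 3 ≤ n) (μ r0 vp : ℝ) (hμ : 0 < μ) (hr0 : 0 < r0)
    (v vt vr vrr : ℝ → ℝ → ℝ) (φ φ' φ'' : ℝ → ℝ)
    (hvt : ∀ t r, 0 < t → r0 < r → HasDerivAt (fun s => v s r) (vt t r) t)
    (hvr : ∀ t r, 0 < t → r0 < r → HasDerivAt (fun y => v t y) (vr t r) r)
    (hvrr : ∀ t r, 0 < t → r0 < r → HasDerivAt (fun y => vr t y) (vrr t r) r)
    (hφ : ∀ r, r0 < r → HasDerivAt φ (φ' r) r)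
    (hφ' : ∀ r, r0 < r → HasDerivAt φ' (φ'' r) r)
    (hφlim : Filter.Tendsto φ Filter.atTop (nhds vp))
    (hPDE : ∀ t r, 0 < t → r0 < r →
      vt t r + v t r * vr t r =
        μ * (vrr t r + ((n : ℝ) - 1) * (vr t r / r - v t r / r ^ 2)))
    (hSW : ∀ r, r0 < r →
      φ r * φ' r = μ * (φ'' r + ((n : ℝ) - 1) * (φ' r / r - φ r / r ^ 2)))
    (hdecay : ∀ t, 0 < t → Filter.Tendsto (fun y => v t y - φ y) Filter.atTop (nhds 0))
    (hdecay' : ∀ t, 0 < t → Filter.Tendsto (fun y => vr t y - φ' y) Filter.atTop (nhds 0))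
    (hint : ∀ t r, 0 < t → r0 < r →
      MeasureTheory.IntegrableOn (fun y => v t y - φ y) (Set.Ici r))
    (hvtint : ∀ t r, 0 < t → r0 < r →
      MeasureTheory.IntegrableOn (fun y => vt t y) (Set.Ici r))
    (w wt : ℝ → ℝ → ℝ)
    (hw : ∀ t r, w t r = -∫ y in Set.Ici r, (v t y - φ y))
    (hwt : ∀ t r, 0 < t → r0 < r → wt t r = -∫ y in Set.Ici r, vt t y) :
    ∀ t r, 0 < t → r0 < r →
      wt t r + (φ r - μ * ((n : ℝ) - 1) / r) * (v t r - φ r) - μ * (vr t r - φ' r) =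
        -(1 / 2) * (v t r - φ r) ^ 2 := by
  intro t r ht hr
  set F : ℝ → ℝ := fun y =>
    -(1/2) * ((v t y)^2 - (φ y)^2) + μ * (vr t y - φ' y)
      + μ * ((n : ℝ) - 1) * ((v t y - φ y) / y) with hF
  have hder : ∀ x, r0 < x → HasDerivAt F (vt t x) x := by
    intro x hx
    have hx0 : x ≠ 0 := (lt_trans hr0 hx).ne'
    have h1 : HasDerivAt (fun y => (v t y)^2 - (φ y)^2)
        (2 * v t x ^ 1 * vr t x - 2 * φ x ^ 1 * φ' x) x :=
      ((hvr t x ht hx).pow 2).sub ((hφ x hx).pow 2)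
    have h2 : HasDerivAt (fun y => vr t y - φ' y) (vrr t x - φ'' x) x :=
      (hvrr t x ht hx).sub (hφ' x hx)
    have h3 : HasDerivAt (fun y => (v t y - φ y) / y)
        (((vr t x - φ' x) * x - (v t x - φ x) * 1) / x ^ 2) x :=
      ((hvr t x ht hx).sub (hφ x hx)).div (hasDerivAt_id x) hx0
    have h := ((h1.const_mul (-(1/2))).add (h2.const_mul μ)).add
      (h3.const_mul (μ * ((n : ℝ) - 1)))
    refine HasDerivAt.congr_deriv (f := F) h ?_
    have e1 := hPDE t x ht hx
    have e2 := hSW x hx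
    have hx2 : (x : ℝ) ^ 2 ≠ 0 := pow_ne_zero 2 hx0
    have key : ((vr t x - φ' x) * x - (v t x - φ x) * 1) / x ^ 2
        = (vr t x / x - v t x / x ^ 2) - (φ' x / x - φ x / x ^ 2) := by
      field_simp
      ring
    rw [key]
    linear_combination e2 - e1
  have hlim : Tendsto F atTop (nhds 0) := by
    have hg := hdecay t ht
    have hh := hdecay' t ht
    have hsum : Tendsto (fun y => v t y + φ y) atTop (nhds (0 + (vp + vp))) :=
      (hg.add (hφlim.add hφlim)).congr (fun y => by ring)
    have hsq : Tendsto (fun y => (v t y)^2 - (φ y)^2) atTop (nhds 0) := by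
      have h2 : Tendsto (fun y => (v t y)^2 - (φ y)^2) atTop
          (nhds (0 * (0 + (vp + vp)))) := (hg.mul hsum).congr (fun y => by ring)
      simpa using h2
    have hinv : Tendsto (fun y => (v t y - φ y) / y) atTop (nhds 0) := by
      have := hg.mul tendsto_inv_atTop_zero
      simpa [div_eq_mul_inv] using this
    have hfin : Tendsto F atTop (nhds (-(1/2) * 0 + μ * 0 + μ * ((n : ℝ) - 1) * 0)) :=
      ((hsq.const_mul (-(1/2))).add (hh.const_mul μ)).add
        (hinv.const_mul (μ * ((n : ℝ) - 1)))
    simpa using hfin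
  have hintIoi : IntegrableOn (fun y => vt t y) (Set.Ioi r) :=
    (hvtint t r ht hr).mono_set Set.Ioi_subset_Ici_self
  have key : (∫ y in Set.Ioi r, vt t y) = 0 - F r :=
    integral_Ioi_of_hasDerivAt_of_tendsto'
      (fun x hx => hder x (lt_of_lt_of_le hr hx)) hintIoi hlim
  have hwt' : wt t r = F r := by
    rw [hwt t r ht hr, MeasureTheory.integral_Ici_eq_integral_Ioi, key]
    ring
  rw [hwt', hF]
  have hr0' : (r : ℝ) ≠ 0 := (lt_trans hr0 hr).ne'
  field_simp
  ring
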